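/- If 𝒢 ⇉ M and ℋ ⇉ N are boundary action groupoids, then the product groupoid 𝒢 × ℋ ⇉ M × N is a boundary action groupoid; its unique open dense orbit is U × V, where U and V are the open dense orbits of 𝒢 and ℋ respectively. -/

import Mathlib

/-!
We model a (locally compact / Lie) groupoid `𝒢 ⇉ U` over a set of units
`U ⊆ X` by a type `A` of arrows together with (total) structural maps;
multiplication is a total function whose value is only relevant on composable
pairs.  Smoothness is modelled at the topological level.
-/

universe u v

/-- An (algebraic) groupoid with arrow space `A` over the set of units `U ⊆ X`. -/
structure GroupoidOn (X : Type u) (A : Type v) (U : Set X) where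
  d : A → X
  r : A → X
  unit : U → A
  inv : A → A
  mul : A → A → A
  d_mem : ∀ g, d g ∈ U
  r_mem : ∀ g, r g ∈ U
  d_unit : ∀ x : U, d (unit x) = x
  r_unit : ∀ x : U, r (unit x) = x
  d_inv : ∀ g, d (inv g) = r g
  r_inv : ∀ g, r (inv g) = d g
  d_mul : ∀ g h, d g = r h → d (mul g h) = d h
  r_mul : ∀ g h, d g = r h → r (mul g h) = r g
  mul_assoc' : ∀ g h k, d g = r h → d h = r k → mul (mul g h) k = mul g (mul h k)
  unit_mul : ∀ g, mul (unit ⟨r g, r_mem g⟩) g = g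
  mul_unit : ∀ g, mul g (unit ⟨d g, d_mem g⟩) = g
  mul_inv : ∀ g, mul g (inv g) = unit ⟨r g, r_mem g⟩
  inv_mul : ∀ g, mul (inv g) g = unit ⟨d g, d_mem g⟩

namespace GroupoidOn

variable {X : Type u} {A : Type v} {U : Set X}

/-- The reduction set `𝒢|_V = d⁻¹(V) ∩ r⁻¹(V)` of a groupoid to `V ⊆ X`. -/
def res (G : GroupoidOn X A U) (V : Set X) : Set A :=
  {g | G.d g ∈ V ∧ G.r g ∈ V}

end GroupoidOn

/-- `G` is a topological groupoid: continuous structural maps, `d` surjective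
(onto the units) and open. Together with local compactness of the arrow and unit
spaces this is the notion of a locally compact groupoid. -/
structure IsTopGroupoid {X : Type u} {A : Type v} {U : Set X}
    [TopologicalSpace X] [TopologicalSpace A] (G : GroupoidOn X A U) : Prop where
  continuous_d : Continuous G.d
  continuous_r : Continuous G.r
  continuous_unit : Continuous G.unit
  continuous_inv : Continuous G.inv
  continuousOn_mul : ContinuousOn (fun p : A × A => G.mul p.1 p.2)
    {p : A × A | G.d p.1 = G.r p.2}
  d_surj : U ⊆ Set.range G.d
  isOpenMap_d : IsOpenMap G.d

namespace GroupoidOn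

variable {X : Type u} {A : Type v} {U : Set X}

/-- A subset `S` of the units is invariant if the range of any arrow whose
domain lies in `S` also lies in `S`. -/
def IsInvariant (G : GroupoidOn X A U) (S : Set X) : Prop :=
  ∀ g, G.d g ∈ S → G.r g ∈ S

end GroupoidOn

/-- The pair groupoid of a subset `S ⊆ X`. -/
def pairGroupoid {X : Type u} (S : Set X) : GroupoidOn X (S × S) S where
  d p := p.2
  r p := p.1
  unit x := (x, x)
  inv p := (p.2, p.1)
  mul p q := (p.1, q.2)
  d_mem p := p.2.2
  r_mem p := p.1.2
  d_unit _ := rfl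
  r_unit _ := rfl
  d_inv _ := rfl
  r_inv _ := rfl
  d_mul _ _ _ := rfl
  r_mul _ _ _ := rfl
  mul_assoc' _ _ _ _ _ := rfl
  unit_mul g := by ext <;> rfl
  mul_unit g := by ext <;> rfl
  mul_inv g := by ext <;> rfl
  inv_mul g := by ext <;> rfl

/-- A continuous right action of a (topological) group `Γ` on a space `Y`.
(In our applications this models a *smooth* action of a Lie group on a
manifold; smoothness is modelled at the topological level.) -/
structure ContRightAction (Γ : Type*) (Y : Type*) [Group Γ] [TopologicalSpace Γ]
    [TopologicalSpace Y] where
  act : Y → Γ → Y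
  act_one : ∀ y, act y 1 = y
  act_mul : ∀ y g h, act y (g * h) = act (act y g) h
  continuous_act : Continuous fun p : Y × Γ => act p.1 p.2

/-- The action groupoid `Y ⋊ Γ` of a continuous right action: arrows `Y × Γ`,
`r (y, g) = y`, `d (y, g) = y · g⁻¹`, and `(y, h)(y·h⁻¹, g) = (y, gh)`. -/
def actionGroupoid {Γ : Type*} {Y : Type*} [Group Γ] [TopologicalSpace Γ]
    [TopologicalSpace Y] (ρ : ContRightAction Γ Y) :
    GroupoidOn Y (Y × Γ) Set.univ where
  d p := ρ.act p.1 p.2⁻¹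
  r p := p.1
  unit y := (y.1, 1)
  inv p := (ρ.act p.1 p.2⁻¹, p.2⁻¹)
  mul p q := (p.1, q.2 * p.2)
  d_mem _ := trivial
  r_mem _ := trivial
  d_unit y := by simp [ρ.act_one]
  r_unit y := rfl
  d_inv p := by
    show ρ.act (ρ.act p.1 p.2⁻¹) (p.2⁻¹)⁻¹ = p.1
    rw [← ρ.act_mul]; simp [ρ.act_one]
  r_inv p := rfl
  d_mul p q h := by
    show ρ.act p.1 (q.2 * p.2)⁻¹ = ρ.act q.1 q.2⁻¹
    rw [mul_inv_rev, ρ.act_mul]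
    exact congrArg (fun z => ρ.act z q.2⁻¹) h
  r_mul _ _ _ := rfl
  mul_assoc' p q k _ _ := by simp [mul_assoc]
  unit_mul g := by simp
  mul_unit g := by simp
  mul_inv g := by simp
  inv_mul g := by simp

/-- `AreRedIso G V H W` : the reductions `G|_V` and `H|_W` are isomorphic as
topological groupoids, via a homeomorphism of the unit sets `V ≃ₜ W` and a
compatible homeomorphism of the arrow spaces preserving domain, range and
multiplication. -/
def AreRedIso {X : Type*} [TopologicalSpace X] {A : Type*} [TopologicalSpace A]
    {S : Set X} (G : GroupoidOn X A S) (V : Set X)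
    {Y : Type*} [TopologicalSpace Y] {B : Type*} [TopologicalSpace B]
    {T : Set Y} (H : GroupoidOn Y B T) (W : Set Y) : Prop :=
  ∃ (base : V ≃ₜ W) (e : {g : A // g ∈ G.res V} ≃ₜ {b : B // b ∈ H.res W}),
    (∀ g : {g : A // g ∈ G.res V}, H.d (e g).1 = (base ⟨G.d g.1, g.2.1⟩ : Y)) ∧
    (∀ g : {g : A // g ∈ G.res V}, H.r (e g).1 = (base ⟨G.r g.1, g.2.2⟩ : Y)) ∧
    (∀ (g h : {g : A // g ∈ G.res V}) (hc : G.d g.1 = G.r h.1),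
      (e ⟨G.mul g.1 h.1,
          ⟨by rw [G.d_mul _ _ hc]; exact h.2.1,
           by rw [G.r_mul _ _ hc]; exact g.2.2⟩⟩).1 = H.mul (e g).1 (e h).1)

/-- `OrbitData G U` : `U` is an open dense invariant subset of the unit set `S`
of `G` on which `G` is the pair groupoid (`𝒢_U ≅ U × U`); such a `U` is the
(unique) open dense orbit of a boundary action groupoid. -/
def OrbitData {X : Type u} [TopologicalSpace X] {A : Type v} [TopologicalSpace A]
    {S : Set X} (G : GroupoidOn X A S) (U : Set X) : Prop :=
  U ⊆ S ∧ IsOpen U ∧ S ⊆ closure U ∧ G.IsInvariant U ∧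
    AreRedIso G U (pairGroupoid U) U

/-- `𝒢 ⇉ S` is a **boundary action groupoid**: a (Lie) groupoid, with an open
dense invariant subset `U` of the units on which it is the pair groupoid,
covered by reductions of action groupoids of (Lie) group actions, the family of
these reductions satisfying the weak gluing condition.  (Smoothness is modelled
at the topological level.) -/
structure IsBoundaryActionGroupoid {X : Type u} [TopologicalSpace X] {A : Type u}
    [TopologicalSpace A] {S : Set X} (G : GroupoidOn X A S) : Prop where
  top : IsTopGroupoid G
  -- (1) an open dense invariant subset `U ⊆ S` with `𝒢_U ≅ U × U`:
  orbit : ∃ U : Set X, OrbitData G U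
  -- (2) + (3) an open cover of the unit space by sets over which `𝒢` is a
  -- reduction of an action groupoid, satisfying the weak gluing condition:
  cover : ∃ (ι : Type u) (V : ι → Set X),
    (∀ i, IsOpen (V i)) ∧ (∀ x ∈ S, ∃ i, x ∈ V i) ∧
    (∀ i, ∃ (Y : Type u) (tY : TopologicalSpace Y) (Γ : Type u) (gΓ : Group Γ)
      (tΓ : TopologicalSpace Γ) (_ : @IsTopologicalGroup Γ tΓ gΓ)
      (ρ : @ContRightAction Γ Y gΓ tΓ tY) (W : Set Y),
      @IsOpen Y tY W ∧
      @AreRedIso X _ A _ S G (V i) Y tY (Y × Γ) (@instTopologicalSpaceProd Y Γ tY tΓ)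
        Set.univ (@actionGroupoid Γ Y gΓ tΓ tY ρ) W) ∧
    (∀ g h : A, G.d g = G.r h → ∃ i, g ∈ G.res (V i) ∧ h ∈ G.res (V i))

/-- The product of two groupoids, with componentwise structural maps. -/
def GroupoidOn.prodG {X : Type u} {A : Type v} {SX : Set X}
    {Y : Type u'} {B : Type v'} {SY : Set Y}
    (G : GroupoidOn X A SX) (H : GroupoidOn Y B SY) :
    GroupoidOn (X × Y) (A × B) (SX ×ˢ SY) where
  d p := (G.d p.1, H.d p.2)
  r p := (G.r p.1, H.r p.2)
  unit x := (G.unit ⟨x.1.1, x.2.1⟩, H.unit ⟨x.1.2, x.2.2⟩)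
  inv p := (G.inv p.1, H.inv p.2)
  mul p q := (G.mul p.1 q.1, H.mul p.2 q.2)
  d_mem p := ⟨G.d_mem p.1, H.d_mem p.2⟩
  r_mem p := ⟨G.r_mem p.1, H.r_mem p.2⟩
  d_unit x := Prod.ext (G.d_unit _) (H.d_unit _)
  r_unit x := Prod.ext (G.r_unit _) (H.r_unit _)
  d_inv p := Prod.ext (G.d_inv p.1) (H.d_inv p.2)
  r_inv p := Prod.ext (G.r_inv p.1) (H.r_inv p.2)
  d_mul p q h := Prod.ext (G.d_mul _ _ (congrArg Prod.fst h)) (H.d_mul _ _ (congrArg Prod.snd h))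
  r_mul p q h := Prod.ext (G.r_mul _ _ (congrArg Prod.fst h)) (H.r_mul _ _ (congrArg Prod.snd h))
  mul_assoc' p q k h1 h2 :=
    Prod.ext (G.mul_assoc' _ _ _ (congrArg Prod.fst h1) (congrArg Prod.fst h2))
      (H.mul_assoc' _ _ _ (congrArg Prod.snd h1) (congrArg Prod.snd h2))
  unit_mul g := Prod.ext (G.unit_mul g.1) (H.unit_mul g.2)
  mul_unit g := Prod.ext (G.mul_unit g.1) (H.mul_unit g.2)
  mul_inv g := Prod.ext (G.mul_inv g.1) (H.mul_inv g.2)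
  inv_mul g := Prod.ext (G.inv_mul g.1) (H.inv_mul g.2)

section Aux

variable {X : Type*} [TopologicalSpace X] {A : Type*} [TopologicalSpace A]
  {Y : Type*} [TopologicalSpace Y] {B : Type*} [TopologicalSpace B]
  {Z : Type*} [TopologicalSpace Z] {C : Type*} [TopologicalSpace C]
  {X' : Type*} [TopologicalSpace X'] {A' : Type*} [TopologicalSpace A']
  {Y' : Type*} [TopologicalSpace Y'] {B' : Type*} [TopologicalSpace B']

/-- Transitivity of reduction isomorphism. -/
lemma AreRedIso.trans' {SX : Set X} {SY : Set Y} {SZ : Set Z}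
    {G : GroupoidOn X A SX} {H : GroupoidOn Y B SY} {K : GroupoidOn Z C SZ}
    {V : Set X} {W : Set Y} {Q : Set Z}
    (h1 : AreRedIso G V H W) (h2 : AreRedIso H W K Q) : AreRedIso G V K Q := by
  obtain ⟨b1, e1, hd1, hr1, hm1⟩ := h1
  obtain ⟨b2, e2, hd2, hr2, hm2⟩ := h2
  refine ⟨b1.trans b2, e1.trans e2, ?_, ?_, ?_⟩
  · intro g
    exact (hd2 (e1 g)).trans
      (congrArg Subtype.val (congrArg b2 (Subtype.ext (hd1 g))))
  · intro g
    exact (hr2 (e1 g)).trans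
      (congrArg Subtype.val (congrArg b2 (Subtype.ext (hr1 g))))
  · intro g h hc
    have hc' : H.d (e1 g).1 = H.r (e1 h).1 := by
      rw [hd1 g, hr1 h]
      exact congrArg Subtype.val (congrArg b1 (Subtype.ext hc))
    have key := hm2 (e1 g) (e1 h) hc'
    exact (congrArg (fun z => (e2 z).1) (Subtype.ext (hm1 g h hc))).trans key

/-- The product of homeomorphisms between set-products. -/
def prodSetHomeo {s : Set X} {t : Set Y} {s' : Set Z} {t' : Set C}
    (b1 : s ≃ₜ s') (b2 : t ≃ₜ t') : ↥(s ×ˢ t) ≃ₜ ↥(s' ×ˢ t') where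
  toFun x := ⟨((b1 ⟨x.1.1, x.2.1⟩ : Z), (b2 ⟨x.1.2, x.2.2⟩ : C)),
    ⟨(b1 ⟨x.1.1, x.2.1⟩).2, (b2 ⟨x.1.2, x.2.2⟩).2⟩⟩
  invFun x := ⟨((b1.symm ⟨x.1.1, x.2.1⟩ : X), (b2.symm ⟨x.1.2, x.2.2⟩ : Y)),
    ⟨(b1.symm ⟨x.1.1, x.2.1⟩).2, (b2.symm ⟨x.1.2, x.2.2⟩).2⟩⟩
  left_inv x := by
    apply Subtype.ext
    exact Prod.ext (congrArg Subtype.val (b1.symm_apply_apply ⟨x.1.1, x.2.1⟩))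
      (congrArg Subtype.val (b2.symm_apply_apply ⟨x.1.2, x.2.2⟩))
  right_inv x := by
    apply Subtype.ext
    exact Prod.ext (congrArg Subtype.val (b1.apply_symm_apply ⟨x.1.1, x.2.1⟩))
      (congrArg Subtype.val (b2.apply_symm_apply ⟨x.1.2, x.2.2⟩))
  continuous_toFun := by
    apply Continuous.subtype_mk
    exact (continuous_subtype_val.comp
        (b1.continuous.comp (continuous_subtype_val.fst.subtype_mk _))).prodMk
      (continuous_subtype_val.comp
        (b2.continuous.comp (continuous_subtype_val.snd.subtype_mk _)))
  continuous_invFun := by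
    apply Continuous.subtype_mk
    exact (continuous_subtype_val.comp
        (b1.symm.continuous.comp (continuous_subtype_val.fst.subtype_mk _))).prodMk
      (continuous_subtype_val.comp
        (b2.symm.continuous.comp (continuous_subtype_val.snd.subtype_mk _)))

/-- The product of homeomorphisms of reductions. -/
def resProdHomeo {SX : Set X} {SY : Set Y} {SX' : Set X'} {SY' : Set Y'}
    {G : GroupoidOn X A SX} {H : GroupoidOn Y B SY}
    {G' : GroupoidOn X' A' SX'} {H' : GroupoidOn Y' B' SY'}
    {V : Set X} {V' : Set Y} {W : Set X'} {W' : Set Y'}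
    (e1 : {g : A // g ∈ G.res V} ≃ₜ {b : A' // b ∈ G'.res W})
    (e2 : {g : B // g ∈ H.res V'} ≃ₜ {b : B' // b ∈ H'.res W'}) :
    {p : A × B // p ∈ (G.prodG H).res (V ×ˢ V')} ≃ₜ
      {q : A' × B' // q ∈ (G'.prodG H').res (W ×ˢ W')} where
  toFun p := ⟨((e1 ⟨p.1.1, p.2.1.1, p.2.2.1⟩).1, (e2 ⟨p.1.2, p.2.1.2, p.2.2.2⟩).1),
    ⟨⟨(e1 ⟨p.1.1, p.2.1.1, p.2.2.1⟩).2.1, (e2 ⟨p.1.2, p.2.1.2, p.2.2.2⟩).2.1⟩,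
     ⟨(e1 ⟨p.1.1, p.2.1.1, p.2.2.1⟩).2.2, (e2 ⟨p.1.2, p.2.1.2, p.2.2.2⟩).2.2⟩⟩⟩
  invFun p := ⟨((e1.symm ⟨p.1.1, p.2.1.1, p.2.2.1⟩).1, (e2.symm ⟨p.1.2, p.2.1.2, p.2.2.2⟩).1),
    ⟨⟨(e1.symm ⟨p.1.1, p.2.1.1, p.2.2.1⟩).2.1, (e2.symm ⟨p.1.2, p.2.1.2, p.2.2.2⟩).2.1⟩,
     ⟨(e1.symm ⟨p.1.1, p.2.1.1, p.2.2.1⟩).2.2, (e2.symm ⟨p.1.2, p.2.1.2, p.2.2.2⟩).2.2⟩⟩⟩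
  left_inv p := by
    apply Subtype.ext
    exact Prod.ext
      (congrArg Subtype.val (e1.symm_apply_apply ⟨p.1.1, p.2.1.1, p.2.2.1⟩))
      (congrArg Subtype.val (e2.symm_apply_apply ⟨p.1.2, p.2.1.2, p.2.2.2⟩))
  right_inv p := by
    apply Subtype.ext
    exact Prod.ext
      (congrArg Subtype.val (e1.apply_symm_apply ⟨p.1.1, p.2.1.1, p.2.2.1⟩))
      (congrArg Subtype.val (e2.apply_symm_apply ⟨p.1.2, p.2.1.2, p.2.2.2⟩))
  continuous_toFun := by
    apply Continuous.subtype_mk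
    exact (continuous_subtype_val.comp
        (e1.continuous.comp (continuous_subtype_val.fst.subtype_mk _))).prodMk
      (continuous_subtype_val.comp
        (e2.continuous.comp (continuous_subtype_val.snd.subtype_mk _)))
  continuous_invFun := by
    apply Continuous.subtype_mk
    exact (continuous_subtype_val.comp
        (e1.symm.continuous.comp (continuous_subtype_val.fst.subtype_mk _))).prodMk
      (continuous_subtype_val.comp
        (e2.symm.continuous.comp (continuous_subtype_val.snd.subtype_mk _)))

/-- Products of reduction isomorphisms. -/
lemma AreRedIso.prodIso {SX : Set X} {SY : Set Y} {SX' : Set X'} {SY' : Set Y'}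
    {G : GroupoidOn X A SX} {H : GroupoidOn Y B SY}
    {G' : GroupoidOn X' A' SX'} {H' : GroupoidOn Y' B' SY'}
    {V : Set X} {V' : Set Y} {W : Set X'} {W' : Set Y'}
    (h1 : AreRedIso G V G' W) (h2 : AreRedIso H V' H' W') :
    AreRedIso (G.prodG H) (V ×ˢ V') (G'.prodG H') (W ×ˢ W') := by
  obtain ⟨b1, e1, hd1, hr1, hm1⟩ := h1
  obtain ⟨b2, e2, hd2, hr2, hm2⟩ := h2
  refine ⟨prodSetHomeo b1 b2, resProdHomeo e1 e2, ?_, ?_, ?_⟩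
  · intro g
    exact Prod.ext (hd1 ⟨g.1.1, g.2.1.1, g.2.2.1⟩) (hd2 ⟨g.1.2, g.2.1.2, g.2.2.2⟩)
  · intro g
    exact Prod.ext (hr1 ⟨g.1.1, g.2.1.1, g.2.2.1⟩) (hr2 ⟨g.1.2, g.2.1.2, g.2.2.2⟩)
  · intro g h hc
    exact Prod.ext
      (hm1 ⟨g.1.1, g.2.1.1, g.2.2.1⟩ ⟨h.1.1, h.2.1.1, h.2.2.1⟩ (congrArg Prod.fst hc))
      (hm2 ⟨g.1.2, g.2.1.2, g.2.2.2⟩ ⟨h.1.2, h.2.1.2, h.2.2.2⟩ (congrArg Prod.snd hc))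

/-- The product of pair groupoids is the pair groupoid of the product. -/
lemma pairProdIso {U : Set X} {V : Set Y} :
    AreRedIso ((pairGroupoid U).prodG (pairGroupoid V)) (U ×ˢ V)
      (pairGroupoid (U ×ˢ V)) (U ×ˢ V) := by
  refine ⟨Homeomorph.refl _,
    { toFun := fun g => ⟨((⟨(g.1.1.1.1, g.1.2.1.1), g.1.1.1.2, g.1.2.1.2⟩ : ↥(U ×ˢ V)),
          (⟨(g.1.1.2.1, g.1.2.2.1), g.1.1.2.2, g.1.2.2.2⟩ : ↥(U ×ˢ V))),
        ⟨⟨g.1.1.2.2, g.1.2.2.2⟩, ⟨g.1.1.1.2, g.1.2.1.2⟩⟩⟩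
      invFun := fun b => ⟨((⟨b.1.1.1.1, b.1.1.2.1⟩, ⟨b.1.2.1.1, b.1.2.2.1⟩),
          (⟨b.1.1.1.2, b.1.1.2.2⟩, ⟨b.1.2.1.2, b.1.2.2.2⟩)),
        ⟨⟨b.1.2.2.1, b.1.2.2.2⟩, ⟨b.1.1.2.1, b.1.1.2.2⟩⟩⟩
      left_inv := fun _ => rfl
      right_inv := fun _ => rfl
      continuous_toFun := by
        apply Continuous.subtype_mk
        apply Continuous.prodMk <;>
          exact Continuous.subtype_mk (by fun_prop) _
      continuous_invFun := by
        apply Continuous.subtype_mk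
        apply Continuous.prodMk <;> apply Continuous.prodMk <;>
          exact Continuous.subtype_mk (by fun_prop) _ },
    ?_, ?_, ?_⟩
  · intro g; rfl
  · intro g; rfl
  · intro g h hc; rfl

/-- The product of two continuous right actions. -/
def ContRightAction.prodAct {Γ : Type*} {Γ' : Type*} [Group Γ] [Group Γ']
    [TopologicalSpace Γ] [TopologicalSpace Γ']
    (ρ : ContRightAction Γ Y) (σ : ContRightAction Γ' Y') :
    ContRightAction (Γ × Γ') (Y × Y') where
  act p g := (ρ.act p.1 g.1, σ.act p.2 g.2)
  act_one p := Prod.ext (ρ.act_one p.1) (σ.act_one p.2)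
  act_mul p g h := Prod.ext (ρ.act_mul p.1 g.1 h.1) (σ.act_mul p.2 g.2 h.2)
  continuous_act :=
    (ρ.continuous_act.comp (continuous_fst.fst.prodMk continuous_snd.fst)).prodMk
      (σ.continuous_act.comp (continuous_fst.snd.prodMk continuous_snd.snd))

/-- The product of action groupoids is the action groupoid of the product action. -/
lemma actProdIso {Γ : Type*} {Γ' : Type*} [Group Γ] [Group Γ']
    [TopologicalSpace Γ] [TopologicalSpace Γ']
    (ρ : ContRightAction Γ Y) (σ : ContRightAction Γ' Y') (W : Set Y) (W' : Set Y') :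
    AreRedIso ((actionGroupoid ρ).prodG (actionGroupoid σ)) (W ×ˢ W')
      (actionGroupoid (ρ.prodAct σ)) (W ×ˢ W') := by
  refine ⟨Homeomorph.refl _,
    { toFun := fun g => ⟨((g.1.1.1, g.1.2.1), (g.1.1.2, g.1.2.2)),
        ⟨⟨g.2.1.1, g.2.1.2⟩, ⟨g.2.2.1, g.2.2.2⟩⟩⟩
      invFun := fun b => ⟨((b.1.1.1, b.1.2.1), (b.1.1.2, b.1.2.2)),
        ⟨⟨b.2.1.1, b.2.1.2⟩, ⟨b.2.2.1, b.2.2.2⟩⟩⟩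
      left_inv := fun _ => rfl
      right_inv := fun _ => rfl
      continuous_toFun := by
        apply Continuous.subtype_mk
        apply Continuous.prodMk <;> apply Continuous.prodMk <;> fun_prop
      continuous_invFun := by
        apply Continuous.subtype_mk
        apply Continuous.prodMk <;> apply Continuous.prodMk <;> fun_prop },
    ?_, ?_, ?_⟩
  · intro g; rfl
  · intro g; rfl
  · intro g h hc; rfl

/-- In the pair-groupoid locus, any two units are connected by an arrow. -/
lemma OrbitData.arrow {S : Set X} {G : GroupoidOn X A S} {U : Set X}
    (h : OrbitData G U) {x y : X} (hx : x ∈ U) (hy : y ∈ U) :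
    ∃ g, G.d g = x ∧ G.r g = y := by
  obtain ⟨hUS, hop, hcl, hinv, base, e, hd, hr, hm⟩ := h
  set b : {p : ↥U × ↥U // p ∈ (pairGroupoid U).res U} :=
    ⟨(base ⟨y, hy⟩, base ⟨x, hx⟩), ⟨(base ⟨x, hx⟩).2, (base ⟨y, hy⟩).2⟩⟩ with hb
  refine ⟨(e.symm b).1, ?_, ?_⟩
  · have h1 := hd (e.symm b)
    rw [e.apply_symm_apply] at h1
    -- h1 : ↑(base ⟨x, hx⟩) = ↑(base ⟨G.d (e.symm b).1, _⟩)
    have h2 := base.toEquiv.injective (Subtype.ext h1 :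
      base ⟨x, hx⟩ = base ⟨G.d (e.symm b).1, (e.symm b).2.1⟩)
    exact (congrArg Subtype.val h2).symm
  · have h1 := hr (e.symm b)
    rw [e.apply_symm_apply] at h1
    have h2 := base.toEquiv.injective (Subtype.ext h1 :
      base ⟨y, hy⟩ = base ⟨G.r (e.symm b).1, (e.symm b).2.2⟩)
    exact (congrArg Subtype.val h2).symm

/-- Uniqueness of the open dense orbit. -/
lemma OrbitData.unique {S : Set X} {G : GroupoidOn X A S} {U1 U2 : Set X}
    (h1 : OrbitData G U1) (h2 : OrbitData G U2) : U1 = U2 := by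
  have key : ∀ Ua Ub, OrbitData G Ua → OrbitData G Ub → Ua ⊆ Ub := by
    intro Ua Ub ha hb y hy
    have hyc : y ∈ closure Ub := hb.2.2.1 (ha.1 hy)
    obtain ⟨x, hxa, hxb⟩ := (mem_closure_iff.mp hyc) Ua ha.2.1 hy
    obtain ⟨g, hgd, hgr⟩ := ha.arrow hxa hy
    have := hb.2.2.2.1 g (by rw [hgd]; exact hxb)
    rwa [hgr] at this
  exact Set.Subset.antisymm (key _ _ h1 h2) (key _ _ h2 h1)

/-- The product of topological groupoids is a topological groupoid. -/
lemma IsTopGroupoid.prodTop {SX : Set X} {SY : Set Y}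
    {G : GroupoidOn X A SX} {H : GroupoidOn Y B SY}
    (hG : IsTopGroupoid G) (hH : IsTopGroupoid H) : IsTopGroupoid (G.prodG H) where
  continuous_d := (hG.continuous_d.comp continuous_fst).prodMk
    (hH.continuous_d.comp continuous_snd)
  continuous_r := (hG.continuous_r.comp continuous_fst).prodMk
    (hH.continuous_r.comp continuous_snd)
  continuous_unit := (hG.continuous_unit.comp
      (continuous_subtype_val.fst.subtype_mk _)).prodMk
    (hH.continuous_unit.comp (continuous_subtype_val.snd.subtype_mk _))
  continuous_inv := (hG.continuous_inv.comp continuous_fst).prodMk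
    (hH.continuous_inv.comp continuous_snd)
  continuousOn_mul := by
    apply ContinuousOn.prodMk
    · exact hG.continuousOn_mul.comp
        ((continuous_fst.fst.prodMk continuous_snd.fst).continuousOn)
        (fun p hp => congrArg Prod.fst hp)
    · exact hH.continuousOn_mul.comp
        ((continuous_fst.snd.prodMk continuous_snd.snd).continuousOn)
        (fun p hp => congrArg Prod.snd hp)
  d_surj := by
    rintro ⟨x, y⟩ ⟨hx, hy⟩
    obtain ⟨a, ha⟩ := hG.d_surj hx
    obtain ⟨b, hb⟩ := hH.d_surj hy
    exact ⟨(a, b), Prod.ext ha hb⟩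
  isOpenMap_d := hG.isOpenMap_d.prodMap hH.isOpenMap_d

/-- The product of orbit data is orbit data for the product groupoid. -/
lemma OrbitData.prodOrbit {G : GroupoidOn X A Set.univ} {H : GroupoidOn Y B Set.univ}
    {U : Set X} {V : Set Y} (hU : OrbitData G U) (hV : OrbitData H V) :
    OrbitData (G.prodG H) (U ×ˢ V) := by
  refine ⟨fun p _ => ⟨trivial, trivial⟩, hU.2.1.prod hV.2.1, ?_, ?_, ?_⟩
  · intro p _
    rw [closure_prod_eq]
    exact ⟨hU.2.2.1 (Set.mem_univ _), hV.2.2.1 (Set.mem_univ _)⟩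
  · intro g hg
    exact ⟨hU.2.2.2.1 g.1 hg.1, hV.2.2.2.1 g.2 hg.2⟩
  · exact (hU.2.2.2.2.prodIso hV.2.2.2.2).trans' pairProdIso

end Aux

/-- If `𝒢 ⇉ M` and `ℋ ⇉ N` are boundary action groupoids,
then the product groupoid `𝒢 × ℋ ⇉ M × N` is a boundary action groupoid; its
unique open dense orbit is `U × V`, where `U` and `V` are the open dense orbits
of `𝒢` and `ℋ` respectively. -/
theorem statement_8 {X : Type u} [TopologicalSpace X] [T2Space X]
    [LocallyCompactSpace X] {A : Type u} [TopologicalSpace A]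
    {Y : Type u} [TopologicalSpace Y] [T2Space Y] [LocallyCompactSpace Y]
    {B : Type u} [TopologicalSpace B]
    (G : GroupoidOn X A Set.univ) (H : GroupoidOn Y B Set.univ)
    (hG : IsBoundaryActionGroupoid G) (hH : IsBoundaryActionGroupoid H) :
    IsBoundaryActionGroupoid (G.prodG H) ∧
    ∀ U V, OrbitData G U → OrbitData H V →
      OrbitData (G.prodG H) (U ×ˢ V) ∧
      -- uniqueness of the open dense orbit of the product:
      ∀ W, OrbitData (G.prodG H) W → W = U ×ˢ V := by
  constructor
  · refine ⟨hG.top.prodTop hH.top, ?_, ?_⟩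
    · obtain ⟨U, hU⟩ := hG.orbit
      obtain ⟨V, hV⟩ := hH.orbit
      exact ⟨U ×ˢ V, hU.prodOrbit hV⟩
    · obtain ⟨ιG, VG, hVGopen, hVGcov, hVGact, hVGglue⟩ := hG.cover
      obtain ⟨ιH, VH, hVHopen, hVHcov, hVHact, hVHglue⟩ := hH.cover
      refine ⟨ιG × ιH, fun i => VG i.1 ×ˢ VH i.2,
        fun i => (hVGopen i.1).prod (hVHopen i.2), ?_, ?_, ?_⟩
      · rintro ⟨x, y⟩ _
        obtain ⟨i, hi⟩ := hVGcov x trivial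
        obtain ⟨j, hj⟩ := hVHcov y trivial
        exact ⟨(i, j), hi, hj⟩
      · rintro ⟨i, j⟩
        obtain ⟨Y1, tY1, Γ1, gΓ1, tΓ1, tg1, ρ1, W1, hW1, hiso1⟩ := hVGact i
        obtain ⟨Y2, tY2, Γ2, gΓ2, tΓ2, tg2, ρ2, W2, hW2, hiso2⟩ := hVHact j
        refine ⟨Y1 × Y2, inferInstance, Γ1 × Γ2, inferInstance, inferInstance,
          inferInstance, ρ1.prodAct ρ2, W1 ×ˢ W2, hW1.prod hW2,
          (hiso1.prodIso hiso2).trans' (actProdIso ρ1 ρ2 W1 W2)⟩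
      · rintro g h hc
        obtain ⟨i, hgi, hhi⟩ := hVGglue g.1 h.1 (congrArg Prod.fst hc)
        obtain ⟨j, hgj, hhj⟩ := hVHglue g.2 h.2 (congrArg Prod.snd hc)
        exact ⟨(i, j), ⟨⟨hgi.1, hgj.1⟩, hgi.2, hgj.2⟩, ⟨⟨hhi.1, hhj.1⟩, hhi.2, hhj.2⟩⟩
  · intro U V hU hV
    exact ⟨hU.prodOrbit hV, fun W hW => hW.unique (hU.prodOrbit hV)⟩
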